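/- Let r ≥ 2 be an integer and let 2 ≤ i ≤ j ≤ r. In the graph G_r, every vertex of level i has at least 2 and at most 4·√(2^{j−i}) neighbors in level j; that is, for every m with 1 ≤ m ≤ 2^i, the number of m' with 1 ≤ m' ≤ 2^j such that (i, m) and (j, m') are distinct and adjacent in G_r is at least 2 and at most 4·2^{(j−i)/2}. -/

import Mathlib

/-- Polar radius of the level-`k` vertices of the construction `G_r`. -/
noncomputable def rho (r k : ℕ) : ℝ :=
  Real.arsinh (Real.sinh (r : ℝ) / Real.sin (Real.pi / 2 ^ k))

/-- Polar angle of the `m`-th vertex of level `k`. -/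
noncomputable def theta (k m : ℕ) : ℝ :=
  (2 * (m : ℝ) - 1) * Real.pi / 2 ^ k

/-- Vertices of `G_r`: the root (`none`) together with pairs `(k, m)`. -/
abbrev Vertex : Type := Option (ℕ × ℕ)

/-- The pairs `(k, m)` with `2 ≤ k ≤ r` and `1 ≤ m ≤ 2^k` (together with the
root) are the actual vertices of `G_r`. -/
def ValidVertex (r : ℕ) : Vertex → Prop
  | none => True
  | some (k, m) => 2 ≤ k ∧ k ≤ r ∧ 1 ≤ m ∧ m ≤ 2 ^ k

/-- Two vertices represent points at hyperbolic distance at most `2r`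
(expressed via the hyperbolic law of cosines). -/
def HypClose (r : ℕ) : Vertex → Vertex → Prop
  | none, none => False
  | none, some (k, _) => rho r k ≤ 2 * (r : ℝ)
  | some (k, _), none => rho r k ≤ 2 * (r : ℝ)
  | some (k, m), some (k', m') =>
      Real.cosh (rho r k) * Real.cosh (rho r k') -
          Real.sinh (rho r k) * Real.sinh (rho r k') *
            Real.cos (theta k m - theta k' m') ≤ Real.cosh (2 * (r : ℝ))

/-- The hyperbolic uniform disk graph `G_r` of the construction: two distinct
vertices are adjacent iff the corresponding points have hyperbolic distance at
most `2r`. -/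
def Gr (r : ℕ) : SimpleGraph Vertex where
  Adj u v := u ≠ v ∧ HypClose r u v
  symm := by
    constructor
    rintro (_ | ⟨k, m⟩) (_ | ⟨k', m'⟩) ⟨hne, h⟩
    · exact ⟨hne.symm, h⟩
    · exact ⟨hne.symm, h⟩
    · exact ⟨hne.symm, h⟩
    · refine ⟨hne.symm, ?_⟩
      simp only [HypClose] at h ⊢
      have hc : Real.cos (theta k' m' - theta k m) = Real.cos (theta k m - theta k' m') := by
        rw [show theta k' m' - theta k m = -(theta k m - theta k' m') by ring, Real.cos_neg]
      have h1 : Real.cosh (rho r k') * Real.cosh (rho r k) =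
          Real.cosh (rho r k) * Real.cosh (rho r k') := mul_comm _ _
      have h2 : Real.sinh (rho r k') * Real.sinh (rho r k) =
          Real.sinh (rho r k) * Real.sinh (rho r k') := mul_comm _ _
      rw [hc, h1, h2]
      exact h
  loopless := by
    constructor
    rintro v ⟨hne, _⟩
    exact hne rfl


section GrNbAux
open Real

set_option maxHeartbeats 1000000

private lemma pidiv_pos (k : ℕ) : 0 < π / 2 ^ k := by positivity

private lemma pidiv_le_half {k : ℕ} (hk : 1 ≤ k) : π / 2 ^ k ≤ π / 2 := by
  apply div_le_div_of_nonneg_left pi_pos.le two_pos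
  calc (2:ℝ) = 2 ^ 1 := (pow_one 2).symm
    _ ≤ 2 ^ k := pow_le_pow_right₀ one_le_two hk

private lemma sin_pidiv_pos {k : ℕ} (hk : 1 ≤ k) : 0 < sin (π / 2 ^ k) :=
  sin_pos_of_pos_of_lt_pi (pidiv_pos k)
    (lt_of_le_of_lt (pidiv_le_half hk) (by linarith [pi_pos]))

private lemma sinh_rho' (r k : ℕ) : Real.sinh (rho r k) = sinh (r:ℝ) / sin (π / 2 ^ k) := by
  simp [rho, sinh_arsinh]

private lemma cosh_rho' (r k : ℕ) :
    Real.cosh (rho r k) = √(1 + (sinh (r:ℝ) / sin (π / 2 ^ k)) ^ 2) := by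
  simp [rho, cosh_arsinh]

private lemma cosh_two_r (r : ℕ) : Real.cosh (2 * (r:ℝ)) = 1 + 2 * sinh (r:ℝ) ^ 2 := by
  rw [cosh_two_mul, cosh_sq]; ring

private lemma hypclose_iff {r i j : ℕ} (hi : 1 ≤ i) (hj : 1 ≤ j) (m m' : ℕ) :
    HypClose r (some (i, m)) (some (j, m')) ↔
      √((sin (π/2^i) ^ 2 + sinh (r:ℝ) ^ 2) * (sin (π/2^j) ^ 2 + sinh (r:ℝ) ^ 2)) -
          sinh (r:ℝ) ^ 2 * cos (theta i m - theta j m') ≤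
        (1 + 2 * sinh (r:ℝ) ^ 2) * (sin (π/2^i) * sin (π/2^j)) := by
  have hc := sin_pidiv_pos hi
  have hd := sin_pidiv_pos hj
  simp only [HypClose, sinh_rho', cosh_rho', cosh_two_r]
  set s := sinh (r:ℝ) with hs
  set c := sin (π/2^i) with hcdef
  set d := sin (π/2^j) with hddef
  have hcd : 0 < c * d := mul_pos hc hd
  have h1 : √(1 + (s/c)^2) * c = √(c^2 + s^2) := by
    rw [show c^2 + s^2 = (1 + (s/c)^2) * c^2 by field_simp,
      Real.sqrt_mul (by positivity), Real.sqrt_sq hc.le]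
  have h2 : √(1 + (s/d)^2) * d = √(d^2 + s^2) := by
    rw [show d^2 + s^2 = (1 + (s/d)^2) * d^2 by field_simp,
      Real.sqrt_mul (by positivity), Real.sqrt_sq hd.le]
  have h3 : s/c*c = s := div_mul_cancel₀ s hc.ne'
  have h4 : s/d*d = s := div_mul_cancel₀ s hd.ne'
  have key : (√(1+(s/c)^2) * √(1+(s/d)^2) - (s/c)*(s/d) * cos (theta i m - theta j m')) * (c*d)
      = √((c^2+s^2)*(d^2+s^2)) - s^2 * cos (theta i m - theta j m') := by
    calc (√(1+(s/c)^2) * √(1+(s/d)^2) - (s/c)*(s/d) * cos (theta i m - theta j m')) * (c*d)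
        = (√(1+(s/c)^2)*c) * (√(1+(s/d)^2)*d)
            - (s/c*c)*(s/d*d)*cos (theta i m - theta j m') := by ring
      _ = √(c^2+s^2)*√(d^2+s^2) - s*s*cos (theta i m - theta j m') := by rw [h1,h2,h3,h4]
      _ = _ := by rw [← Real.sqrt_mul (by positivity)]; ring
  constructor
  · intro h
    have h' := mul_le_mul_of_nonneg_right h hcd.le
    rw [key] at h'
    exact h'
  · intro h
    rw [← key] at h
    exact le_of_mul_le_mul_right h hcd

private lemma sin_half_sq_le {r i j m m' : ℕ} (hr : 1 ≤ r) (hi : 1 ≤ i) (hj : 1 ≤ j)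
    (h : HypClose r (some (i,m)) (some (j,m'))) :
    sin ((theta i m - theta j m') / 2) ^ 2 ≤ π/2^i * (π/2^j) := by
  rw [hypclose_iff hi hj m m'] at h
  have hc := sin_pidiv_pos hi
  have hd := sin_pidiv_pos hj
  have hrr : (0:ℝ) < (r:ℝ) := by exact_mod_cast (by omega : 0 < r)
  have hs : 0 < sinh (r:ℝ) := sinh_pos_iff.2 hrr
  set s := sinh (r:ℝ) with hsdef
  set c := sin (π/2^i) with hcdef
  set d := sin (π/2^j) with hddef
  set Δ := theta i m - theta j m' with hΔdef
  have hsqrt : s^2 + c*d ≤ √((c^2+s^2)*(d^2+s^2)) := by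
    rw [show ((c^2+s^2)*(d^2+s^2)) = (s^2+c*d)^2 + s^2*(c-d)^2 by ring]
    calc s^2 + c*d = √((s^2+c*d)^2) := (Real.sqrt_sq (by positivity)).symm
      _ ≤ _ := Real.sqrt_le_sqrt (by nlinarith [mul_nonneg (sq_nonneg s) (sq_nonneg (c-d))])
  have h1 : s^2 * (1 - cos Δ) ≤ s^2 * (2*(c*d)) := by nlinarith [hsqrt, h]
  have h2 : 1 - cos Δ ≤ 2*(c*d) := le_of_mul_le_mul_left h1 (by positivity)
  have hΔ : 1 - cos Δ = 2 * sin (Δ/2)^2 := by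
    conv_lhs => rw [show Δ = 2*(Δ/2) by ring]
    rw [cos_two_mul', cos_sq']
    ring
  have hcd_ab : c*d ≤ (π/2^i)*(π/2^j) :=
    mul_le_mul (sin_le (pidiv_pos i).le) (sin_le (pidiv_pos j).le) hd.le (pidiv_pos i).le
  linarith

private lemma hypclose_of {r i j : ℕ} (hi : 1 ≤ i) (hj : 1 ≤ j) (m m' : ℕ)
    (h : (sin (π/2^i) - sin (π/2^j))^2/2
        + sinh (r:ℝ) ^2 * (1 - cos (theta i m - theta j m'))
        ≤ 2 * sinh (r:ℝ) ^2 * (sin (π/2^i) * sin (π/2^j))) :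
    HypClose r (some (i,m)) (some (j,m')) := by
  rw [hypclose_iff hi hj m m']
  set s := sinh (r:ℝ)
  set c := sin (π/2^i)
  set d := sin (π/2^j)
  set Δ := theta i m - theta j m'
  have hsqrt : √((c^2+s^2)*(d^2+s^2)) ≤ (c^2+d^2)/2 + s^2 := by
    rw [show (c^2+d^2)/2 + s^2 = √(((c^2+d^2)/2+s^2)^2) from (Real.sqrt_sq (by positivity)).symm]
    apply Real.sqrt_le_sqrt
    nlinarith [sq_nonneg (c^2 - d^2)]
  nlinarith [hsqrt, h]

private lemma theta_diff {i j : ℕ} (hij : i ≤ j) (m m' : ℕ) :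
    theta i m - theta j m' =
      (((2:ℤ)^(j-i) * (2*(m:ℤ) - 1) + 1 - 2*(m':ℤ) : ℤ) : ℝ) * π / 2^j := by
  have h2 : (2:ℝ)^(j-i) * 2^i = 2^j := by rw [← pow_add, Nat.sub_add_cancel hij]
  have key : (2*(m:ℝ)-1) * π / 2^i = (2:ℝ)^(j-i) * (2*(m:ℝ)-1) * π / 2^j := by
    rw [div_eq_div_iff (by positivity) (by positivity), ← h2]
    ring
  unfold theta
  rw [key]
  push_cast
  ring

private lemma two_pow_le_sinh {r : ℕ} (hr : 2 ≤ r) : (2:ℝ)^(r-2) ≤ sinh (r:ℝ) := by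
  have hexp : (2:ℝ)^r ≤ exp (r:ℝ) := by
    calc (2:ℝ)^r ≤ (exp 1)^r :=
          pow_le_pow_left₀ (by norm_num) (by nlinarith [Real.exp_one_gt_d9]) r
    _ = exp (r:ℝ) := by rw [← Real.exp_nat_mul, mul_one]
  have hneg : exp (-(r:ℝ)) ≤ 1 := Real.exp_le_one_iff.mpr (by simp)
  have hP : (2:ℝ)^(r-2) * 4 = 2^r := by
    have h := pow_add (2:ℝ) (r-2) 2
    rw [show r-2+2 = r by omega] at h
    rw [h]; norm_num
  have h1 : (1:ℝ) ≤ 2^(r-2) := one_le_pow₀ one_le_two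
  rw [Real.sinh_eq]
  linarith

private lemma one_minus_cos (x : ℝ) : 1 - cos x = 2 * sin (x/2)^2 := by
  conv_lhs => rw [show x = 2*(x/2) by ring]
  rw [cos_two_mul', cos_sq']
  ring

private lemma suff_chain {r i j : ℕ} (hr : 2 ≤ r) (hi : 2 ≤ i) (hlt : i < j) (hjr : j ≤ r) :
    (sin (π/2^i) - sin (π/2^j))^2/2 + sinh (r:ℝ)^2 * (1 - cos (π/2^j))
      ≤ 2 * sinh (r:ℝ)^2 * (sin (π/2^i) * sin (π/2^j)) := by
  set a := π/2^i with hadef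
  set b := π/2^j with hbdef
  set s := sinh (r:ℝ) with hsdef
  set K := (2:ℝ)^(j-i) with hKdef
  have ha0 : 0 < a := pidiv_pos i
  have hb0 : 0 < b := pidiv_pos j
  have ha2 : a ≤ π/2 := pidiv_le_half (by omega)
  have hb2 : b ≤ π/2 := pidiv_le_half (by omega)
  have hpow2 : (2:ℝ)^(j-i) * 2^i = 2^j := by rw [← pow_add, Nat.sub_add_cancel hlt.le]
  have hK : a = K * b := by
    rw [hadef, hbdef, hKdef, mul_div_assoc', div_eq_div_iff (by positivity) (by positivity),
      ← hpow2]
    ring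
  have hK2 : (2:ℝ) ≤ K := by
    calc (2:ℝ) = 2^1 := (pow_one 2).symm
      _ ≤ 2^(j-i) := pow_le_pow_right₀ one_le_two (by omega)
  have hba : b ≤ a := by nlinarith
  have hpi := pi_pos
  have hsa0 : 0 < sin a := sin_pidiv_pos (by omega)
  have hsb0 : 0 < sin b := sin_pidiv_pos (by omega)
  have hsin_sub : sin a - sin b ≤ a - b := by
    rw [sin_sub_sin]
    have h1 : sin ((a-b)/2) ≤ (a-b)/2 := sin_le (by linarith)
    have h2 : cos ((a+b)/2) ≤ 1 := cos_le_one _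
    have h3 : 0 ≤ sin ((a-b)/2) := sin_nonneg_of_nonneg_of_le_pi (by linarith) (by linarith)
    nlinarith
  have hsin_sub0 : 0 ≤ sin a - sin b := by
    rw [sin_sub_sin]
    have h3 : 0 ≤ sin ((a-b)/2) := sin_nonneg_of_nonneg_of_le_pi (by linarith) (by linarith)
    have h4 : 0 ≤ cos ((a+b)/2) := cos_nonneg_of_mem_Icc ⟨by linarith, by linarith⟩
    positivity
  have hA2 : (sin a - sin b)^2 ≤ a^2 := by nlinarith
  have hB2 : 1 - cos b ≤ b^2/2 := by
    rw [one_minus_cos]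
    have h5 : sin (b/2) ≤ b/2 := sin_le (by linarith)
    have h6 : 0 ≤ sin (b/2) := sin_nonneg_of_nonneg_of_le_pi (by linarith) (by linarith)
    nlinarith
  have hsa : 2/π * a ≤ sin a := mul_le_sin ha0.le ha2
  have hsb : 2/π * b ≤ sin b := mul_le_sin hb0.le hb2
  have hs0 : 0 < s := by
    rw [hsdef]
    exact sinh_pos_iff.2 (by exact_mod_cast (by omega : 0 < r))
  have hsK : K ≤ s^2 := by
    have h1 := two_pow_le_sinh hr
    have h2 : ((2:ℝ)^(r-2))^2 = 2^((r-2)*2) := by rw [← pow_mul]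
    have h3 : K ≤ (2:ℝ)^((r-2)*2) := pow_le_pow_right₀ one_le_two (by omega)
    have h4 : (0:ℝ) ≤ 2^(r-2) := by positivity
    calc K ≤ (2:ℝ)^((r-2)*2) := h3
      _ = ((2:ℝ)^(r-2))^2 := h2.symm
      _ ≤ s^2 := pow_le_pow_left₀ h4 h1 2
  have hab : 0 < a*b := mul_pos ha0 hb0
  have e1 : (sin a - sin b)^2/2 ≤ s^2*(a*b)/2 := by
    have h7 : a^2 = K*(a*b) := by rw [hK]; ring
    have h8 : K*(a*b) ≤ s^2*(a*b) := mul_le_mul_of_nonneg_right hsK hab.le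
    linarith
  have e2 : s^2*(1 - cos b) ≤ s^2*(a*b)/4 := by
    have hbb : b^2/2 ≤ (a*b)/4 := by nlinarith
    have h9 := mul_le_mul_of_nonneg_left hB2 (sq_nonneg s)
    have h10 := mul_le_mul_of_nonneg_left hbb (sq_nonneg s)
    linarith
  have e3 : (3/4)*(s^2*(a*b)) ≤ 2*s^2*(sin a * sin b) := by
    have h8 : (2/π*a)*(2/π*b) ≤ sin a * sin b :=
      mul_le_mul hsa hsb (by positivity) hsa0.le
    have hpi2 : π ≤ 3.15 := by linarith [pi_lt_d2]
    have h9 : (3/8)*(a*b) ≤ (2/π*a)*(2/π*b) := by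
      rw [show (2/π*a)*(2/π*b) = (4/π^2)*(a*b) by ring]
      apply mul_le_mul_of_nonneg_right _ hab.le
      rw [div_le_div_iff₀ (by norm_num) (by positivity)]
      nlinarith
    have h10 : (3/8)*(a*b) ≤ sin a * sin b := le_trans h9 h8
    have h11 := mul_le_mul_of_nonneg_left h10 (by positivity : (0:ℝ) ≤ 2*s^2)
    linarith
  linarith

private lemma sin_sq_mod {N : ℕ} (hN : 0 < N) {u v : ℤ} (h : (N:ℤ) ∣ (u - v)) :
    sin ((u:ℝ)*π/N)^2 = sin ((v:ℝ)*π/N)^2 := by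
  obtain ⟨k, hk⟩ := h
  have hu' : u = v + N*k := by linarith
  have hu : (u:ℝ) = (v:ℝ) + (N:ℝ)*(k:ℝ) := by exact_mod_cast congrArg Int.cast hu'
  have hNne : ((N:ℝ)) ≠ 0 := by positivity
  have harg : (u:ℝ)*π/N = (v:ℝ)*π/N + (k:ℝ)*π := by rw [hu]; field_simp
  have hcos : cos ((k:ℝ)*π) = (-1:ℝ)^k := by simpa using Real.cos_int_mul_pi_sub 0 k
  have h1 : ((-1:ℝ)^k)^2 = 1 := by
    rcases Int.even_or_odd k with he | ho
    · rw [he.neg_one_zpow]; norm_num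
    · rw [Odd.neg_one_zpow ho]; norm_num
  rw [harg, sin_add, Real.sin_int_mul_pi, hcos, mul_zero, add_zero, mul_pow, h1, mul_one]

private lemma cos_two_pi_sub' (x : ℝ) : cos (2*π - x) = cos x := by
  simpa using Real.cos_nat_mul_two_pi_sub x 1

private lemma cos_sub_two_pi' (x : ℝ) : cos (x - 2*π) = cos x := by
  rw [show x - 2*π = -(2*π - x) by ring, cos_neg, cos_two_pi_sub']

end GrNbAux


open Real in
set_option maxHeartbeats 2000000 in
/-- Lemma 13 (Gr_neighbors): every level-`i` vertex of `G_r` has at least `2`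
and at most `4·√(2^{j−i})` neighbors in level `j`, for `2 ≤ i ≤ j ≤ r`. -/
theorem Gr_neighbors (r i j m : ℕ) (hr : 2 ≤ r) (hi : 2 ≤ i) (hij : i ≤ j) (hjr : j ≤ r)
    (hm1 : 1 ≤ m) (hm2 : m ≤ 2 ^ i) :
    2 ≤ {m' : ℕ | 1 ≤ m' ∧ m' ≤ 2 ^ j ∧ (Gr r).Adj (some (i, m)) (some (j, m'))}.ncard ∧
      ({m' : ℕ | 1 ≤ m' ∧ m' ≤ 2 ^ j ∧ (Gr r).Adj (some (i, m)) (some (j, m'))}.ncard : ℝ) ≤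
        4 * (2 : ℝ) ^ (((j : ℝ) - (i : ℝ)) / 2) := by
  classical
  set S := {m' : ℕ | 1 ≤ m' ∧ m' ≤ 2 ^ j ∧ (Gr r).Adj (some (i, m)) (some (j, m'))} with hSdef
  have hSfin : S.Finite := by
    apply Set.Finite.subset (Set.finite_Icc 1 (2^j))
    intro x hx
    exact Set.mem_Icc.mpr ⟨hx.1, hx.2.1⟩
  constructor
  · -- lower bound: at least two neighbors
    rcases eq_or_lt_of_le hij with heq | hlt
    · -- case j = i
      subst heq
      have h4 : 4 ≤ 2^i := by
        calc 4 = 2^2 := rfl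
          _ ≤ 2^i := Nat.pow_le_pow_right (by norm_num) hi
      have hpow : ((2:ℝ)^i) ≠ 0 := by positivity
      have hkey : ∀ m' : ℕ, Real.cos (theta i m - theta i m') = Real.cos (2*(π/2^i)) →
          m' ≠ m → 1 ≤ m' → m' ≤ 2^i → m' ∈ S := by
        intro m' hcos hne hge hle
        refine ⟨hge, hle, ?_, ?_⟩
        · simp only [ne_eq, Option.some.injEq, Prod.mk.injEq, not_and, true_and]
          intro h
          exact hne h.symm
        · apply hypclose_of (by omega) (by omega)
          rw [hcos, one_minus_cos, show (2*(π/2^i))/2 = π/2^i by ring]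
          apply le_of_eq
          ring
      have hA1 : (if m = 2^i then 1 else m + 1) ∈ S := by
        by_cases hc : m = 2^i
        · rw [if_pos hc]
          apply hkey _ _ (by omega) (by omega) (by omega)
          have hΔ : theta i m - theta i 1 = 2*π - 2*(π/2^i) := by
            unfold theta
            rw [hc]
            push_cast
            field_simp
            ring
          rw [hΔ, cos_two_pi_sub']
        · rw [if_neg hc]
          apply hkey _ _ (by omega) (by omega) (by omega)
          have hΔ : theta i m - theta i (m+1) = -(2*(π/2^i)) := by
            unfold theta
            push_cast
            field_simp
            ring
          rw [hΔ, Real.cos_neg]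
      have hA2 : (if m = 1 then 2^i else m - 1) ∈ S := by
        by_cases hc : m = 1
        · rw [if_pos hc]
          apply hkey _ _ (by omega) (by omega) (by omega)
          have hΔ : theta i m - theta i (2^i) = 2*(π/2^i) - 2*π := by
            unfold theta
            rw [hc]
            push_cast
            field_simp
            ring
          rw [hΔ, cos_sub_two_pi']
        · rw [if_neg hc]
          apply hkey _ _ (by omega) (by omega) (by omega)
          have hΔ : theta i m - theta i (m-1) = 2*(π/2^i) := by
            unfold theta
            push_cast [Nat.cast_sub (show 1 ≤ m by omega)]
            field_simp
            ring
          rw [hΔ]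
      have hne : (if m = 2^i then 1 else m + 1) ≠ (if m = 1 then 2^i else m - 1) := by
        split_ifs <;> omega
      calc 2 = ({(if m = 2^i then 1 else m + 1), (if m = 1 then 2^i else m - 1)} : Set ℕ).ncard :=
            (Set.ncard_pair hne).symm
        _ ≤ S.ncard := Set.ncard_le_ncard
            (Set.insert_subset_iff.mpr ⟨hA1, Set.singleton_subset_iff.mpr hA2⟩) hSfin
    · -- case i < j
      have hp : 2^(j-i-1) * 2^(i+1) = 2^j := by rw [← pow_add]; congr 1; omega
      have h2i : (2:ℕ)^(i+1) = 2*2^i := by rw [pow_succ]; ring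
      have hone : 1 ≤ (2:ℕ)^(j-i-1) := Nat.one_le_two_pow
      have hm11 : 1 ≤ 2^(j-i-1) * (2*m - 1) := Nat.mul_pos (Nat.two_pow_pos _) (by omega)
      have hm12 : 2^(j-i-1) * (2*m - 1) + 1 ≤ 2^j := by
        have h1 : 2^(j-i-1) * (2*m-1) ≤ 2^(j-i-1) * (2^(i+1) - 1) :=
          Nat.mul_le_mul_left _ (by omega)
        have h2 : 2^(j-i-1)*(2^(i+1)-1) = 2^j - 2^(j-i-1) := by
          rw [Nat.mul_sub, hp, mul_one]
        omega
      have hchain := suff_chain hr hi hlt hjr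
      have hmem : ∀ m' : ℕ, 1 ≤ m' → m' ≤ 2^j →
          Real.cos (theta i m - theta j m') = Real.cos (π/2^j) → m' ∈ S := by
        intro m' h1 h2 hcos
        refine ⟨h1, h2, ?_, ?_⟩
        · simp only [ne_eq, Option.some.injEq, Prod.mk.injEq, not_and]
          intro hij'
          omega
        · apply hypclose_of (by omega) (by omega)
          rw [hcos]
          exact hchain
      have hcastm1 : ((2^(j-i-1) * (2*m - 1) : ℕ) : ℤ) = 2^(j-i-1) * (2*(m:ℤ) - 1) := by
        push_cast [Nat.cast_sub (show 1 ≤ 2*m by omega)]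
        ring
      have hq : (2:ℤ)^(j-i) = 2 * 2^(j-i-1) := by
        rw [← pow_succ']
        congr 1
        omega
      have hA1 : 2^(j-i-1) * (2*m - 1) ∈ S := by
        apply hmem _ hm11 (le_trans (Nat.le_succ _) hm12)
        rw [theta_diff hij]
        rw [show ((2:ℤ)^(j-i) * (2*(m:ℤ) - 1) + 1 - 2*((2^(j-i-1) * (2*m - 1) : ℕ):ℤ)) = 1 by
          rw [hcastm1, hq]; ring]
        norm_num
      have hA2 : 2^(j-i-1) * (2*m - 1) + 1 ∈ S := by
        apply hmem _ (by omega) hm12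
        rw [theta_diff hij]
        rw [show ((2:ℤ)^(j-i) * (2*(m:ℤ) - 1) + 1 - 2*((2^(j-i-1) * (2*m - 1) + 1 : ℕ):ℤ)) = -1 by
          rw [show ((2^(j-i-1) * (2*m - 1) + 1 : ℕ):ℤ)
              = ((2^(j-i-1) * (2*m - 1) : ℕ):ℤ) + 1 by push_cast; ring, hcastm1, hq]
          ring]
        rw [show (((-1:ℤ)):ℝ) * π / 2^j = -(π/2^j) by push_cast; ring, Real.cos_neg]
      have hne : 2^(j-i-1) * (2*m - 1) ≠ 2^(j-i-1) * (2*m - 1) + 1 := by omega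
      calc 2 = ({2^(j-i-1) * (2*m - 1), 2^(j-i-1) * (2*m - 1) + 1} : Set ℕ).ncard :=
            (Set.ncard_pair hne).symm
        _ ≤ S.ncard := Set.ncard_le_ncard
            (Set.insert_subset_iff.mpr ⟨hA1, Set.singleton_subset_iff.mpr hA2⟩) hSfin
  · -- upper bound
    set N := 2^(j+1) with hNdef
    have hN0 : 0 < N := Nat.two_pow_pos _
    set M : ℤ := 2^(j-i) * (2*(m:ℤ) - 1) with hMdef
    set e : ℤ := (M+1) % 2 with hedef
    set D : ℝ := π * Real.sqrt ((2:ℝ)^(j-i)) with hDdef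
    have hD0 : 0 ≤ D := by positivity
    set A : ℤ := -⌊(D + (e:ℝ))/2⌋ with hAdef
    set B : ℤ := ⌊(D - (e:ℝ))/2⌋ with hBdef
    set T : Finset ℤ := (Finset.Icc (-(2^j : ℤ)) (2^j)).filter
        (fun v => v % 2 = e ∧ (v:ℝ)^2 ≤ π^2 * 2^(j-i)) with hTdef
    have hNcast : ((N:ℕ):ℤ) = 2*((2:ℤ)^j) := by rw [hNdef]; push_cast [pow_succ]; ring
    have hNr : ((N:ℕ):ℝ) = 2*((2:ℝ)^j) := by rw [hNdef]; push_cast [pow_succ]; ring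
    have hpows : (2:ℝ)^(j-i) * 2^i = 2^j := by rw [← pow_add, Nat.sub_add_cancel hij]
    have step1 : S.ncard ≤ T.card := by
      rw [Set.ncard_eq_toFinset_card S hSfin]
      apply Finset.card_le_card_of_injOn (fun m' : ℕ => Int.bmod (M + 1 - 2*(m':ℤ)) N)
      · intro m' hm'
        rw [Finset.mem_coe, Set.Finite.mem_toFinset] at hm'
        obtain ⟨hge, hle, hadj⟩ := hm'
        have hclose : HypClose r (some (i,m)) (some (j,m')) := hadj.2
        have hrange1 : -((2:ℤ)^j) ≤ Int.bmod (M + 1 - 2*(m':ℤ)) N := by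
          have h1 := Int.le_bmod (x := M + 1 - 2*(m':ℤ)) hN0
          omega
        have hrange2 : Int.bmod (M + 1 - 2*(m':ℤ)) N ≤ 2^j := by
          have h1 := Int.bmod_le (x := M + 1 - 2*(m':ℤ)) hN0
          omega
        have hmn : Int.bmod (M + 1 - 2*(m':ℤ)) N % (N:ℤ) = (M + 1 - 2*(m':ℤ)) % (N:ℤ) :=
          Int.bmod_emod
        have hpar : Int.bmod (M + 1 - 2*(m':ℤ)) N % 2 = e := by
          have hdvd : (2:ℤ) ∣ ((N:ℕ):ℤ) := ⟨2^j, hNcast⟩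
          have h2 : Int.bmod (M + 1 - 2*(m':ℤ)) N % 2 = (M + 1 - 2*(m':ℤ)) % 2 :=
            Int.ModEq.of_dvd hdvd hmn
          rw [hedef]
          omega
        have hdvd2 : ((N:ℕ):ℤ) ∣ (Int.bmod (M + 1 - 2*(m':ℤ)) N - (M + 1 - 2*(m':ℤ))) := by
          have := Int.ModEq.dvd (a := M + 1 - 2*(m':ℤ)) (b := Int.bmod (M + 1 - 2*(m':ℤ)) N)
            hmn.symm
          exact this
        have hsin := sin_half_sq_le (r := r) (by omega) (by omega) (by omega) hclose
        have hhalf : (theta i m - theta j m')/2 = ((M + 1 - 2*(m':ℤ) : ℤ):ℝ)*π/((N:ℕ):ℝ) := by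
          rw [theta_diff hij, hNr, hMdef]
          push_cast
          ring
        rw [hhalf] at hsin
        have hsin2 : Real.sin ((Int.bmod (M + 1 - 2*(m':ℤ)) N : ℝ)*π/((N:ℕ):ℝ))^2
            = Real.sin (((M + 1 - 2*(m':ℤ) : ℤ):ℝ)*π/((N:ℕ):ℝ))^2 :=
          sin_sq_mod hN0 hdvd2
        set v : ℤ := Int.bmod (M + 1 - 2*(m':ℤ)) N with hvdef
        have hvabs : |(v:ℝ)| ≤ (2:ℝ)^j := by
          rw [abs_le]
          constructor
          · exact_mod_cast hrange1
          · exact_mod_cast hrange2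
        have harg_le : |(v:ℝ)| * π/((N:ℕ):ℝ) ≤ π/2 := by
          rw [hNr, div_le_div_iff₀ (by positivity) (by norm_num)]
          nlinarith [pi_pos, hvabs, abs_nonneg ((v:ℝ)), pow_pos (show (0:ℝ) < 2 by norm_num) j]
        have hjordan : 2/π * (|(v:ℝ)| * π/((N:ℕ):ℝ)) ≤ Real.sin (|(v:ℝ)| * π/((N:ℕ):ℝ)) :=
          Real.mul_le_sin (by positivity) harg_le
        have habs_sin : Real.sin (|(v:ℝ)| * π/((N:ℕ):ℝ))^2 = Real.sin ((v:ℝ)*π/((N:ℕ):ℝ))^2 := by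
          rcases abs_cases ((v:ℝ)) with ⟨h,_⟩|⟨h,_⟩ <;> rw [h]
          rw [show -(v:ℝ)*π/((N:ℕ):ℝ) = -((v:ℝ)*π/((N:ℕ):ℝ)) by ring, Real.sin_neg]
          ring
        have hfin : ((v:ℝ))^2 ≤ π^2 * 2^(j-i) := by
          have h1 : (2/π * (|(v:ℝ)| * π/((N:ℕ):ℝ)))^2 ≤ Real.sin (|(v:ℝ)| * π/((N:ℕ):ℝ))^2 :=
            pow_le_pow_left₀ (by positivity) hjordan 2
          have h2 : 2/π*(|(v:ℝ)| * π/((N:ℕ):ℝ)) = |(v:ℝ)| / 2^j := by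
            rw [hNr]
            field_simp
          have h3 : ((v:ℝ))^2/((2:ℝ)^j)^2 ≤ (π/2^i)*(π/2^j) := by
            calc ((v:ℝ))^2/((2:ℝ)^j)^2 = (|(v:ℝ)| / 2^j)^2 := by rw [div_pow, sq_abs]
              _ = (2/π*(|(v:ℝ)| * π/((N:ℕ):ℝ)))^2 := by rw [h2]
              _ ≤ Real.sin (|(v:ℝ)| * π/((N:ℕ):ℝ))^2 := h1
              _ = Real.sin ((v:ℝ)*π/((N:ℕ):ℝ))^2 := habs_sin
              _ = Real.sin (((M + 1 - 2*(m':ℤ) : ℤ):ℝ)*π/((N:ℕ):ℝ))^2 := hsin2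
              _ ≤ (π/2^i)*(π/2^j) := hsin
          rw [div_le_iff₀ (by positivity)] at h3
          have h4 : (π/2^i)*(π/2^j)*((2:ℝ)^j)^2 = π^2*2^(j-i) := by
            rw [show ((2:ℝ)^j)^2 = (2^(j-i)*2^i)*2^j by rw [hpows]; ring]
            field_simp
          linarith
        simp only [hTdef, Finset.mem_coe, Finset.mem_filter, Finset.mem_Icc]
        exact ⟨⟨hrange1, hrange2⟩, hpar, hfin⟩
      · intro x hx y hy hxy
        have hx' : x ∈ S := by simpa using hx
        have hy' : y ∈ S := by simpa using hy
        replace hxy : Int.bmod (M + 1 - 2*(x:ℤ)) N = Int.bmod (M + 1 - 2*(y:ℤ)) N := hxy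
        have hmn : (M+1-2*(x:ℤ)) % (N:ℤ) = (M+1-2*(y:ℤ)) % (N:ℤ) := by
          rw [← Int.bmod_emod (x := M+1-2*(x:ℤ)) (m := N),
            ← Int.bmod_emod (x := M+1-2*(y:ℤ)) (m := N), hxy]
        have hdvd : ((N:ℕ):ℤ) ∣ ((M+1-2*(y:ℤ)) - (M+1-2*(x:ℤ))) := Int.ModEq.dvd hmn
        have hzero : (M+1-2*(y:ℤ)) - (M+1-2*(x:ℤ)) = 0 := by
          apply Int.eq_zero_of_dvd_of_natAbs_lt_natAbs hdvd
          have hNa : ((N:ℕ):ℤ).natAbs = N := Int.natAbs_natCast N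
          rw [hNa]
          have hxb : x ≤ 2^j := hx'.2.1
          have hyb : y ≤ 2^j := hy'.2.1
          have hx1 : 1 ≤ x := hx'.1
          have hy1 : 1 ≤ y := hy'.1
          have hNval : N = 2*2^j := by rw [hNdef, pow_succ]; ring
          omega
        omega
    have step2 : (T.card : ℝ) ≤ D + 1 := by
      have he01 : e = 0 ∨ e = 1 := by rw [hedef]; omega
      have he0 : (0:ℝ) ≤ (e:ℝ) := by rcases he01 with h|h <;> simp [h]
      have he1 : (e:ℝ) ≤ 1 := by rcases he01 with h|h <;> simp [h]
      have hDsq : D^2 = π^2 * 2^(j-i) := by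
        rw [hDdef, mul_pow, Real.sq_sqrt (by positivity)]
      have hcard : T.card ≤ (Finset.Icc A B).card := by
        apply Finset.card_le_card_of_injOn (fun v : ℤ => (v - e)/2)
        · intro v hv
          simp only [hTdef, Finset.mem_coe, Finset.mem_filter, Finset.mem_Icc] at hv
          obtain ⟨⟨_, _⟩, hparv, hsqv⟩ := hv
          have habs : |(v:ℝ)| ≤ D := by
            rw [← Real.sqrt_sq_eq_abs, ← Real.sqrt_sq hD0]
            exact Real.sqrt_le_sqrt (by rw [hDsq]; exact hsqv)
          obtain ⟨hvl, hvu⟩ := abs_le.mp habs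
          have hwv : v = 2*((v-e)/2) + e := by omega
          have hwr : ((v:ℝ)) = 2*((((v-e)/2 : ℤ)):ℝ) + (e:ℝ) := by exact_mod_cast hwv
          rw [Finset.mem_coe, Finset.mem_Icc]
          constructor
          · have h1 : -((v-e)/2) ≤ ⌊(D + (e:ℝ))/2⌋ := by
              apply Int.le_floor.mpr
              push_cast
              linarith
            rw [hAdef]
            beta_reduce
            omega
          · apply Int.le_floor.mpr
            linarith
        · intro v1 hv1 v2 hv2 heq12
          simp only [hTdef, Finset.coe_filter, Set.mem_setOf_eq, Finset.mem_Icc] at hv1 hv2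
          obtain ⟨_, hp1, _⟩ := hv1
          obtain ⟨_, hp2, _⟩ := hv2
          replace heq12 : (v1 - e)/2 = (v2 - e)/2 := heq12
          omega
      calc (T.card : ℝ) ≤ ((Finset.Icc A B).card : ℝ) := by exact_mod_cast hcard
        _ ≤ D + 1 := by
          rw [Int.card_Icc]
          rcases le_or_gt (B + 1 - A) 0 with h|h
          · rw [Int.toNat_of_nonpos h]
            simp
            linarith
          · have h1 : ((B+1-A).toNat : ℤ) = B + 1 - A := Int.toNat_of_nonneg h.le
            have h2 : ((B+1-A).toNat : ℝ) = (B:ℝ) + 1 - (A:ℝ) := by exact_mod_cast h1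
            rw [h2, hAdef, hBdef]
            push_cast
            have h3 := Int.floor_le ((D - (e:ℝ))/2)
            have h4 := Int.floor_le ((D + (e:ℝ))/2)
            linarith
    have hfinal : (S.ncard : ℝ) ≤ D + 1 := le_trans (by exact_mod_cast step1) step2
    have hrpow : (2:ℝ) ^ (((j:ℝ) - (i:ℝ))/2) = Real.sqrt ((2:ℝ)^(j-i)) := by
      rw [Real.sqrt_eq_rpow, ← Real.rpow_natCast 2 (j-i), ← Real.rpow_mul (by norm_num)]
      congr 1
      rw [Nat.cast_sub hij]
      ring
    rcases eq_or_lt_of_le hij with heq|hlt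
    · have hD : D = π := by
        rw [hDdef, heq, Nat.sub_self]
        simp
      have h5 : (S.ncard : ℝ) < 5 := by
        rw [hD] at hfinal
        nlinarith [Real.pi_lt_d2]
      have h6 : S.ncard ≤ 4 := by
        have : S.ncard < 5 := by exact_mod_cast h5
        omega
      have h7 : (2:ℝ) ^ (((j:ℝ) - (i:ℝ))/2) = 1 := by
        rw [heq, sub_self, zero_div, Real.rpow_zero]
      rw [h7]
      calc (S.ncard : ℝ) ≤ 4 := by exact_mod_cast h6
        _ = 4 * 1 := by norm_num
    · rw [hrpow]
      have ht2 : (2:ℝ) ≤ Real.sqrt ((2:ℝ)^(j-i))^2 := by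
        rw [Real.sq_sqrt (by positivity)]
        calc (2:ℝ) = 2^1 := (pow_one 2).symm
          _ ≤ 2^(j-i) := pow_le_pow_right₀ one_le_two (by omega)
      have ht0 : 0 ≤ Real.sqrt ((2:ℝ)^(j-i)) := Real.sqrt_nonneg _
      have htl : (1.4:ℝ) ≤ Real.sqrt ((2:ℝ)^(j-i)) := by nlinarith
      have hπ : π ≤ 3.15 := by linarith [Real.pi_lt_d2]
      have hmul : π * Real.sqrt ((2:ℝ)^(j-i)) ≤ 3.15 * Real.sqrt ((2:ℝ)^(j-i)) :=
        mul_le_mul_of_nonneg_right hπ ht0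
      rw [hDdef] at hfinal
      linarith
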